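/- With the maps φ and ψ defined below between V_{z_1z_2,n+m} ⊕ V_{z_1z_2,n+m+1} and V_{z_1,n} ⊗ V_{z_2,m}, one has ψ ∘ φ = id and φ ∘ ψ = id. Here, with γ = (z_1^2 z_2^2 − z_1^{-2} z_2^{-2})^{-1}: φ(w_1) = v_1⊗v_2, φ(Xw_1) = z_2 Xv_1⊗v_2 + (−1)^n z_1^{-1} v_1⊗Xv_2, φ(w_2) = (−1)^{n+1} z_1^{-1}(z_2^2−z_2^{-2})γ Xv_1⊗v_2 + z_2(z_1^2−z_1^{-2})γ v_1⊗Xv_2, φ(Xw_2) = Xv_1⊗Xv_2; and ψ(v_1⊗v_2) = w_1, ψ(Xv_1⊗v_2) = z_2(z_1^2−z_1^{-2})γ Xw_1 + (−1)^{n+1} z_1^{-1} w_2, ψ(v_1⊗Xv_2) = (−1)^n z_1^{-1}(z_2^2−z_2^{-2})γ Xw_1 + z_2 w_2, ψ(Xv_1⊗Xv_2) = Xw_2. -/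
import Mathlib


noncomputable section

open Matrix

/-- `γ = (z₁²z₂² − z₁⁻²z₂⁻²)⁻¹`. -/
def gam (z₁ z₂ : ℂ) : ℂ := (z₁ ^ 2 * z₂ ^ 2 - (z₁⁻¹) ^ 2 * (z₂⁻¹) ^ 2)⁻¹

/-- The matrix of `φ : V_{z₁z₂,n+m} ⊕ V_{z₁z₂,n+m+1} → V_{z₁,n} ⊗ V_{z₂,m}`, with rows
indexed by the tensor basis `(v₁⊗v₂, v₁⊗Xv₂, Xv₁⊗v₂, Xv₁⊗Xv₂)` and columns by
`(w₁, Xw₁, w₂, Xw₂)`. -/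
def phiMat (z₁ z₂ : ℂ) (n : ℤ) : Matrix (Fin 4) (Fin 4) ℂ :=
  !![1, 0, 0, 0;
     0, (-1 : ℂ) ^ n * z₁⁻¹, z₂ * (z₁ ^ 2 - (z₁⁻¹) ^ 2) * gam z₁ z₂, 0;
     0, z₂, -((-1 : ℂ) ^ n) * z₁⁻¹ * (z₂ ^ 2 - (z₂⁻¹) ^ 2) * gam z₁ z₂, 0;
     0, 0, 0, 1]

/-- The matrix of `ψ : V_{z₁,n} ⊗ V_{z₂,m} → V_{z₁z₂,n+m} ⊕ V_{z₁z₂,n+m+1}`, with rows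
indexed by `(w₁, Xw₁, w₂, Xw₂)` and columns by the tensor basis. -/
def psiMat (z₁ z₂ : ℂ) (n : ℤ) : Matrix (Fin 4) (Fin 4) ℂ :=
  !![1, 0, 0, 0;
     0, (-1 : ℂ) ^ n * z₁⁻¹ * (z₂ ^ 2 - (z₂⁻¹) ^ 2) * gam z₁ z₂,
        z₂ * (z₁ ^ 2 - (z₁⁻¹) ^ 2) * gam z₁ z₂, 0;
     0, z₂, -((-1 : ℂ) ^ n) * z₁⁻¹, 0;
     0, 0, 0, 1]

set_option maxHeartbeats 1600000 in
/-- `ψ ∘ φ = id` and `φ ∘ ψ = id`. -/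
theorem psi_phi_inverse (z₁ z₂ : ℂ) (h₁ : z₁ ≠ 0) (h₂ : z₂ ≠ 0)
    (hγ : z₁ ^ 2 * z₂ ^ 2 - (z₁⁻¹) ^ 2 * (z₂⁻¹) ^ 2 ≠ 0) (n : ℤ) :
    psiMat z₁ z₂ n * phiMat z₁ z₂ n = 1 ∧ phiMat z₁ z₂ n * psiMat z₁ z₂ n = 1 := by
  have he : (-1 : ℂ) ^ n = 1 ∨ (-1 : ℂ) ^ n = -1 := by
    rcases Int.even_or_odd n with h | h
    · exact Or.inl h.neg_one_zpow
    · exact Or.inr h.neg_one_zpow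
  have hγ' : z₁ ^ 2 * z₂ ^ 2 - (z₁ ^ 2)⁻¹ * (z₂ ^ 2)⁻¹ ≠ 0 := by
    simpa [inv_pow] using hγ
  have hmul : (z₁ ^ 2 * z₂ ^ 2 - (z₁ ^ 2)⁻¹ * (z₂ ^ 2)⁻¹) * gam z₁ z₂ = 1 := by
    rw [gam, inv_pow, inv_pow]; exact mul_inv_cancel₀ hγ'
  have hmul2 : (z₁ ^ 2 * z₂ ^ 2 - (z₁⁻¹) ^ 2 * (z₂⁻¹) ^ 2) * gam z₁ z₂ = 1 := by
    rw [gam]; exact mul_inv_cancel₀ hγ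
  have h1 : z₁⁻¹ * z₁⁻¹ = (z₁ ^ 2)⁻¹ := by rw [← mul_inv, sq]
  have key : z₁⁻¹ * (z₂ ^ 2 - (z₂ ^ 2)⁻¹) * gam z₁ z₂ * z₁⁻¹
      + z₂ * (z₁ ^ 2 - (z₁ ^ 2)⁻¹) * gam z₁ z₂ * z₂ = 1 := by
    linear_combination hmul + (z₂ ^ 2 - (z₂ ^ 2)⁻¹) * gam z₁ z₂ * h1
  rcases he with h | h <;>
  · constructor <;>
    · ext i j
      fin_cases i <;> fin_cases j <;>
        simp [Matrix.mul_apply, Fin.sum_univ_four, phiMat, psiMat, Matrix.one_apply,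
          vecHead, vecTail, h] <;>
      first
        | linear_combination key
        | linear_combination key - hmul2
        | linear_combination key + hmul2
        | linear_combination hmul2
        | ring
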